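/- The Wigner projectors D^{RC;u} := A^{RC;u} B^{c_i} (for u = (i,j) ∈ I_{RC}) are self-adjoint and satisfy D^{RC;u₁} D^{RC;u₂} = δ_{u₁,u₂} D^{RC;u₁} for all u₁, u₂ ∈ I_{RC}; in particular they are pairwise commuting orthogonal projectors. Moreover Σ_{u∈I_{RC}} D^{RC;u} = D^{RC}, so that D^{RC} is itself a self-adjoint idempotent. -/

import Mathlib

open Matrix Finset in
lemma schur_rep_star_eq_inv {H : Type*} [Group H] {d : ℕ}
    (R : H →* Matrix (Fin d) (Fin d) ℂ)
    (hRu : ∀ m, R m * star (R m) = 1) (m : H) : star (R m) = R m⁻¹ := by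
  have h1 : R m * R m⁻¹ = 1 := by rw [← R.map_mul, mul_inv_cancel, R.map_one]
  have := Matrix.inv_eq_right_inv (hRu m)
  rw [← this, Matrix.inv_eq_right_inv h1]

open Matrix Finset in
lemma schur_ortho {H : Type*} [Group H] [Fintype H] {d : ℕ} (hd : 0 < d)
    (R : H →* Matrix (Fin d) (Fin d) ℂ)
    (hRu : ∀ m, R m * star (R m) = 1)
    (hirr : ∀ M : Matrix (Fin d) (Fin d) ℂ,
      (∀ m, R m * M = M * R m) → ∃ z : ℂ, M = z • (1 : Matrix (Fin d) (Fin d) ℂ))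
    (j a k b : Fin d) :
    ∑ m : H, R m j a * star (R m k b) =
      ((Fintype.card H : ℂ)/d) * ((if a = b then 1 else 0) * (if j = k then 1 else 0)) := by
  have hd' : (d : ℂ) ≠ 0 := Nat.cast_ne_zero.mpr hd.ne'
  have hstar : ∀ m : H, star (R m) = R m⁻¹ := schur_rep_star_eq_inv R hRu
  set X : Matrix (Fin d) (Fin d) ℂ := Matrix.single a b 1 with hX
  set M : Matrix (Fin d) (Fin d) ℂ := ∑ m : H, R m * X * R m⁻¹ with hM
  have hcomm : ∀ n, R n * M = M * R n := by
    intro n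
    have key : ∀ m : H, R n * (R m * X * R m⁻¹) = R (n*m) * X * R (n*m)⁻¹ * R n := by
      intro m
      have h1 : R (n*m) = R n * R m := R.map_mul n m
      have h2 : R (n*m)⁻¹ * R n = R m⁻¹ := by rw [← R.map_mul]; congr 1; group
      rw [mul_assoc (R (n*m) * X), h2, h1]
      simp [mul_assoc]
    rw [hM, Finset.mul_sum, Finset.sum_mul]
    exact Fintype.sum_equiv (Equiv.mulLeft n) _ _ (fun m => key m)
  obtain ⟨z, hz⟩ := hirr M hcomm
  have htr : Matrix.trace M = (Fintype.card H : ℂ) * (if a = b then 1 else 0) := by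
    rw [hM, Matrix.trace_sum]
    have : ∀ m : H, Matrix.trace (R m * X * R m⁻¹) = (if a = b then 1 else 0) := by
      intro m
      rw [Matrix.trace_mul_cycle, ← R.map_mul, inv_mul_cancel, R.map_one, one_mul]
      by_cases hab : a = b
      · subst hab; simp [hX, Matrix.trace, Matrix.single, Matrix.diag]
      · simp [hX, Matrix.trace, Matrix.single, Matrix.diag, hab]
        exact fun h => hab h.symm
    simp [this, Finset.card_univ]
  have hz' : z = (Fintype.card H : ℂ)/d * (if a = b then 1 else 0) := by
    have h2 : Matrix.trace M = z * d := by
      rw [hz]; simp [Matrix.trace_smul, Matrix.trace_one, mul_comm]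
    rw [htr] at h2
    rw [div_mul_eq_mul_div, eq_div_iff hd']
    exact h2.symm
  have hMentry : M j k = z * (if j = k then 1 else 0) := by
    rw [hz]; simp [Matrix.smul_apply, Matrix.one_apply]
  have hMentry2 : M j k = ∑ m : H, R m j a * star (R m k b) := by
    rw [hM, Matrix.sum_apply]
    congr 1; ext m
    have hsb : star (R m k b) = R m⁻¹ b k := by
      rw [← Matrix.star_apply, hstar]
    rw [hsb]
    rw [Matrix.mul_apply]
    have h3 : ∀ e, (R m * X) j e = R m j a * (if b = e then 1 else 0) := by
      intro e
      rw [Matrix.mul_apply]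
      simp [hX, Matrix.single, Finset.mul_sum, mul_ite, ite_and]
    simp only [h3]
    simp [ite_mul, mul_ite, Finset.sum_ite_eq]
  rw [← hMentry2, hMentry, hz']
  ring



/-- The Wigner projectors `D^{RC;u} = A^{RC;u} B^{c_i}` (for `u = (i,j)`)
are self-adjoint, satisfy `D^{RC;u₁} D^{RC;u₂} = δ_{u₁,u₂} D^{RC;u₁}` (so they are pairwise
commuting orthogonal projectors), and sum to `D^{RC}`, which is itself a self-adjoint
idempotent. -/
theorem quantum_double_Wigner_projectors_decomposition
    {G : Type*} [Group G] [Fintype G] [DecidableEq G]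
    {𝒜 : Type*} [Ring 𝒜] [Algebra ℂ 𝒜] [StarRing 𝒜] [StarModule ℂ 𝒜]
    (A B : G → 𝒜)
    (hA1 : A 1 = 1)
    (hAmul : ∀ h h' : G, A h * A h' = A (h * h'))
    (hAstar : ∀ h : G, star (A h) = A h⁻¹)
    (hBstar : ∀ g : G, star (B g) = B g)
    (hBmul : ∀ g g' : G, B g * B g' = if g = g' then B g else 0)
    (hBsum : ∑ g : G, B g = 1)
    (hAB : ∀ h g : G, A h * B g = B (h * g * h⁻¹) * A h)
    -- the conjugacy class `C = {c_1, …, c_{|C|}}`, representative `r_C`, iterators `q_i`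
    (r : G) (nC : ℕ) (c : Fin nC → G) (q : Fin nC → G)
    (hcinj : Function.Injective c)
    (hcclass : ∀ g : G, IsConj r g ↔ ∃ i, c i = g)
    (hq : ∀ i, c i = q i * r * (q i)⁻¹)
    -- the centralizer `N_C` of `r_C` in `G`
    (N : Subgroup G) [Fintype N] (hN : N = Subgroup.centralizer {r})
    -- an irreducible unitary matrix representation `R` of `N_C` of dimension `d_R`
    (dR : ℕ) (hdR : 0 < dR)
    (R : N →* Matrix (Fin dR) (Fin dR) ℂ)
    (hRunitary : ∀ m, R m * star (R m) = 1)
    (hRirr : ∀ M : Matrix (Fin dR) (Fin dR) ℂ,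
      (∀ m, R m * M = M * R m) → ∃ z : ℂ, M = z • (1 : Matrix (Fin dR) (Fin dR) ℂ))
    -- the Wigner projectors `D^{RC;u} = A^{RC;u} B^{c_i}` for `u = (i,j) ∈ I_{RC}`
    (D : Fin nC × Fin dR → 𝒜)
    (hD : ∀ u : Fin nC × Fin dR, D u =
      (((dR : ℂ) / (Fintype.card N : ℂ)) •
        ∑ m : N, star (R m u.2 u.2) • A (q u.1 * (m : G) * (q u.1)⁻¹)) * B (c u.1))
    -- the full Wigner projector `D^{RC}`, defined with the character `χ_R = trace ∘ R`
    (DRC : 𝒜)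
    (hDRC : DRC = ((dR : ℂ) / (Fintype.card N : ℂ)) •
      ∑ m : N, star (Matrix.trace (R m)) •
        ∑ i : Fin nC, A (q i * (m : G) * (q i)⁻¹) * B (c i)) :
    (∀ u, star (D u) = D u) ∧
    (∀ u₁ u₂, D u₁ * D u₂ = if u₁ = u₂ then D u₁ else 0) ∧
    (∀ u₁ u₂, Commute (D u₁) (D u₂)) ∧
    (∑ u : Fin nC × Fin dR, D u = DRC) ∧
    star DRC = DRC ∧ DRC * DRC = DRC := by
  classical
  -- notation
  set s : ℂ := (dR : ℂ) / (Fintype.card N : ℂ) with hs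
  set S : Fin nC → Fin dR → 𝒜 :=
    fun i j => ∑ m : N, star (R m j j) • A (q i * (m : G) * (q i)⁻¹) with hSdef
  have hD' : ∀ u : Fin nC × Fin dR, D u = (s • S u.1 u.2) * B (c u.1) := hD
  have hdR' : (dR : ℂ) ≠ 0 := Nat.cast_ne_zero.mpr hdR.ne'
  have hcN' : ((Fintype.card N : ℂ)) ≠ 0 := Nat.cast_ne_zero.mpr Fintype.card_ne_zero
  have hone : s * ((Fintype.card N : ℂ) / (dR : ℂ)) = 1 := by
    rw [hs]; field_simp
  have hstar : ∀ m : N, star (R m) = R m⁻¹ := schur_rep_star_eq_inv R hRunitary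
  have hstarE : ∀ (m : N) (a b : Fin dR), R m⁻¹ a b = star (R m b a) := by
    intro m a b; rw [← hstar m, Matrix.star_apply]
  -- commutation of A (q i m q i⁻¹) with B (c i)
  have hcommAB : ∀ (i : Fin nC) (m : N),
      A (q i * (m : G) * (q i)⁻¹) * B (c i) = B (c i) * A (q i * (m : G) * (q i)⁻¹) := by
    intro i m
    have hmr : r * (m : G) = (m : G) * r := by
      have hmem : (m : G) ∈ Subgroup.centralizer {r} := by rw [← hN]; exact m.2
      exact Subgroup.mem_centralizer_iff.mp hmem r rfl
    have key : (m : G) * r * (m : G)⁻¹ = r := by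
      rw [← hmr, mul_inv_cancel_right]
    rw [hAB]
    congr 2
    rw [hq i]
    have : q i * (m : G) * (q i)⁻¹ * (q i * r * (q i)⁻¹) * (q i * (m : G) * (q i)⁻¹)⁻¹
        = q i * ((m : G) * r * (m : G)⁻¹) * (q i)⁻¹ := by group
    rw [this, key]
  -- B commutes with S termwise
  have hBS : ∀ (i : Fin nC) (j : Fin dR), B (c i) * S i j = S i j * B (c i) := by
    intro i j
    rw [hSdef]
    rw [Finset.mul_sum, Finset.sum_mul]
    congr 1; ext m
    rw [mul_smul_comm, smul_mul_assoc, hcommAB]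
  -- the key B-A-B identity
  have hBAB : ∀ (i i' : Fin nC) (m' : N),
      B (c i) * (A (q i' * (m' : G) * (q i')⁻¹) * B (c i')) =
        if i = i' then A (q i' * (m' : G) * (q i')⁻¹) * B (c i') else 0 := by
    intro i i' m'
    rw [hcommAB i' m', ← mul_assoc, hBmul]
    by_cases h : i = i'
    · subst h
      rw [if_pos rfl, if_pos rfl]
    · have hcc : c i ≠ c i' := fun hcc => h (hcinj hcc)
      rw [if_neg hcc, if_neg h, zero_mul]
  -- self-adjointness of the S i j
  have hSstar : ∀ (i : Fin nC) (j : Fin dR), star (S i j) = S i j := by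
    intro i j
    rw [hSdef, star_sum]
    refine Fintype.sum_equiv (Equiv.inv N) _ _ (fun m => ?_)
    simp only [Equiv.inv_apply]
    rw [star_smul, star_star, hAstar, hstarE, star_star]
    congr 1
    push_cast
    group
  -- self-adjointness of the D u
  have hDstar : ∀ u, star (D u) = D u := by
    intro u
    rw [hD' u, star_mul, star_smul, hSstar, hBstar]
    have hsstar : star s = s := by
      rw [hs]; simp [star_div₀]
    rw [hsstar, mul_smul_comm, hBS, ← smul_mul_assoc]
  -- Schur orthogonality, star form
  have schur' : ∀ (j k j' : Fin dR), ∑ m : N, star (R m j j) * R m k j' =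
      ((Fintype.card N : ℂ)/(dR : ℂ)) * ((if j = j' then 1 else 0) * (if j = k then 1 else 0)) := by
    intro j k j'
    have h0 := schur_ortho hdR R hRunitary hRirr j j k j'
    have h1 : ∑ m : N, star (R m j j) * R m k j'
        = star (∑ m : N, R m j j * star (R m k j')) := by
      rw [star_sum]; congr 1; ext m; rw [star_mul', star_star]
    rw [h1, h0]
    simp [star_mul', star_div₀]
    split_ifs <;> simp
  -- product of the S
  have hSS : ∀ (i : Fin nC) (j j' : Fin dR), S i j * S i j' =
      if j = j' then ((Fintype.card N : ℂ)/(dR : ℂ)) • S i j else 0 := by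
    intro i j j'
    have expand : S i j * S i j' =
        ∑ n : N, (∑ m : N, star (R m j j) * star (R ((m : N)⁻¹ * n) j' j')) •
          A (q i * (n : G) * (q i)⁻¹) := by
      rw [hSdef, Finset.sum_mul]
      have h1 : ∀ m : N, (star (R m j j) • A (q i * (m : G) * (q i)⁻¹)) *
          (∑ m' : N, star (R m' j' j') • A (q i * (m' : G) * (q i)⁻¹)) =
          ∑ m' : N, (star (R m j j) * star (R m' j' j')) •
            A (q i * ((m * m' : N) : G) * (q i)⁻¹) := by
        intro m
        rw [Finset.mul_sum]
        congr 1; ext m'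
        rw [smul_mul_assoc, mul_smul_comm, smul_smul, hAmul]
        congr 1
        push_cast
        group
      simp only [h1]
      have h2 : ∀ m : N, (∑ m' : N, (star (R m j j) * star (R m' j' j')) •
          A (q i * ((m * m' : N) : G) * (q i)⁻¹)) =
          ∑ n : N, (star (R m j j) * star (R (m⁻¹ * n) j' j')) •
            A (q i * (n : G) * (q i)⁻¹) := by
        intro m
        refine Fintype.sum_equiv (Equiv.mulLeft m) _ _ (fun m' => ?_)
        simp [Equiv.coe_mulLeft, inv_mul_cancel_left]
      simp only [h2]
      rw [Finset.sum_comm]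
      congr 1; ext n
      rw [Finset.sum_smul]
    rw [expand]
    have hK : ∀ n : N, (∑ m : N, star (R m j j) * star (R ((m : N)⁻¹ * n) j' j')) =
        (if j = j' then 1 else 0) * ((Fintype.card N : ℂ)/(dR : ℂ)) * star (R n j j') := by
      intro n
      have hRmul : ∀ m : N, R (m⁻¹ * n) j' j' = ∑ k, star (R m k j') * R n k j' := by
        intro m
        rw [R.map_mul, Matrix.mul_apply]
        congr 1; ext k
        rw [hstarE]
      calc ∑ m : N, star (R m j j) * star (R ((m : N)⁻¹ * n) j' j')
          = ∑ m : N, ∑ k, star (R m j j) * (R m k j' * star (R n k j')) := by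
            congr 1; ext m
            rw [hRmul, star_sum, Finset.mul_sum]
            congr 1; ext k
            rw [star_mul', star_star]
        _ = ∑ k, star (R n k j') * (∑ m : N, star (R m j j) * R m k j') := by
            rw [Finset.sum_comm]
            congr 1; ext k
            rw [Finset.mul_sum]
            congr 1; ext m
            ring
        _ = ∑ k, star (R n k j') * (((Fintype.card N : ℂ)/(dR : ℂ)) *
              ((if j = j' then 1 else 0) * (if j = k then 1 else 0))) := by
            congr 1; ext k; rw [schur']
        _ = (if j = j' then 1 else 0) * ((Fintype.card N : ℂ)/(dR : ℂ)) * star (R n j j') := by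
            simp only [mul_ite, mul_one, mul_zero, ite_mul, zero_mul, one_mul]
            rw [Finset.sum_ite_eq]
            simp [Finset.mem_univ]
            split_ifs <;> ring
    simp only [hK]
    split_ifs with hj
    · subst hj
      rw [hSdef, Finset.smul_sum]
      congr 1; ext n
      rw [smul_smul, one_mul]
    · simp
  -- the orthogonality of the projectors
  have hprod : ∀ u₁ u₂, D u₁ * D u₂ = if u₁ = u₂ then D u₁ else 0 := by
    rintro ⟨i, j⟩ ⟨i', j'⟩
    rw [hD' ⟨i, j⟩, hD' ⟨i', j'⟩]
    simp only
    have hassoc : ((s • S i j) * B (c i)) * ((s • S i' j') * B (c i'))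
        = (s • S i j) * (B (c i) * ((s • S i' j') * B (c i'))) := by
      rw [mul_assoc]
    rw [hassoc]
    have hstep : B (c i) * ((s • S i' j') * B (c i'))
        = if i = i' then (s • S i' j') * B (c i') else 0 := by
      have : B (c i) * (S i' j' * B (c i')) = if i = i' then S i' j' * B (c i') else 0 := by
        calc B (c i) * (S i' j' * B (c i'))
            = ∑ m' : N, star (R m' j' j') •
                (B (c i) * (A (q i' * (m' : G) * (q i')⁻¹) * B (c i'))) := by
              rw [hSdef, Finset.sum_mul, Finset.mul_sum]
              congr 1; ext m'
              rw [smul_mul_assoc, mul_smul_comm]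
          _ = ∑ m' : N, star (R m' j' j') •
                (if i = i' then A (q i' * (m' : G) * (q i')⁻¹) * B (c i') else 0) := by
              congr 1; ext m'
              rw [hBAB]
          _ = if i = i' then S i' j' * B (c i') else 0 := by
              split_ifs with h
              · rw [hSdef, Finset.sum_mul]
                congr 1; ext m'
                rw [smul_mul_assoc]
              · simp
      rw [smul_mul_assoc, mul_smul_comm, this]
      split_ifs with h
      · rfl
      · rw [smul_zero]
    rw [hstep]
    by_cases h : i = i'
    · subst h
      rw [if_pos rfl]
      have : (s • S i j) * ((s • S i j') * B (c i)) = (s * s) • ((S i j * S i j') * B (c i)) := by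
        rw [smul_mul_assoc, smul_mul_assoc, mul_smul_comm, smul_smul, mul_assoc]
      rw [this, hSS]
      by_cases hj : j = j'
      · subst hj
        rw [if_pos rfl, if_pos rfl]
        rw [smul_mul_assoc, smul_smul, mul_assoc s s _, hone, mul_one, ← smul_mul_assoc]
      · rw [if_neg hj]
        have : (Prod.mk i j) ≠ (Prod.mk i j') := by
          intro hcon; exact hj (congrArg Prod.snd hcon)
        rw [if_neg this]
        simp
    · rw [if_neg h, mul_zero]
      have : (Prod.mk i j) ≠ (Prod.mk i' j') := by
        intro hcon; exact h (congrArg Prod.fst hcon)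
      rw [if_neg this]
  -- sum of the projectors
  have htrace : ∀ m : N, star (Matrix.trace (R m)) = ∑ j : Fin dR, star (R m j j) := by
    intro m; rw [Matrix.trace, star_sum]; rfl
  have h1 : ∀ (i : Fin nC) (j : Fin dR), D (i, j) =
      s • ∑ m : N, star (R m j j) • (A (q i * (m : G) * (q i)⁻¹) * B (c i)) := by
    intro i j
    rw [hD' (i, j), smul_mul_assoc, hSdef]
    congr 1
    rw [Finset.sum_mul]
    congr 1; ext m
    rw [smul_mul_assoc]
  have key : ∀ (F : Fin nC → Fin dR → N → 𝒜),
      ∑ m : N, ∑ i : Fin nC, ∑ j : Fin dR, F i j m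
        = ∑ i : Fin nC, ∑ j : Fin dR, ∑ m : N, F i j m := by
    intro F
    calc ∑ m : N, ∑ i : Fin nC, ∑ j : Fin dR, F i j m
        = ∑ i : Fin nC, ∑ m : N, ∑ j : Fin dR, F i j m := Finset.sum_comm
      _ = ∑ i : Fin nC, ∑ j : Fin dR, ∑ m : N, F i j m :=
          Finset.sum_congr rfl (fun i _ => Finset.sum_comm)
  have hsum : ∑ u : Fin nC × Fin dR, D u = DRC := by
    rw [Fintype.sum_prod_type]
    simp only [h1]
    rw [hDRC]
    simp only [htrace, Finset.sum_smul, Finset.smul_sum]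
    exact (key _).symm
  refine ⟨hDstar, hprod, ?_, hsum, ?_, ?_⟩
  · intro u₁ u₂
    unfold Commute SemiconjBy
    rw [hprod, hprod]
    by_cases h : u₁ = u₂
    · subst h; simp
    · rw [if_neg h, if_neg (Ne.symm h)]
  · rw [← hsum, star_sum]
    exact Finset.sum_congr rfl (fun u _ => hDstar u)
  · rw [← hsum]
    calc (∑ u₁ : Fin nC × Fin dR, D u₁) * (∑ u₂ : Fin nC × Fin dR, D u₂)
        = ∑ u₁ : Fin nC × Fin dR, ∑ u₂ : Fin nC × Fin dR, D u₁ * D u₂ := by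
          rw [Finset.sum_mul]
          congr 1; ext u₁
          rw [Finset.mul_sum]
      _ = ∑ u₁ : Fin nC × Fin dR, D u₁ := by
          congr 1; ext u₁
          simp only [hprod]
          rw [Finset.sum_ite_eq]
          simp
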